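/- For (x, a, p, s) ∈ ℂ⁴ the following are equivalent: (1) (x, a, p, s) lies in the closure of 𝔽 in ℂ⁴; (2) there exists A = (a_{ij})_{i,j=1}² ∈ M₂(ℂ) with ‖A‖ ≤ 1 such that (a₁₁, a₂₂, det A, a₁₂ + a₂₁) = (x, a, p, s); (3) (s, ax−p) ∈ Γ, |p| ≤ 1, and 1 − |a|² − |x|² + |p|² − |s|²/2 − |s² − 4(ax−p)|/2 ≥ 0. -/

import Mathlib

/-- The operator norm of a 2×2 complex matrix, acting on the Euclidean space ℂ². -/
noncomputable def opNorm (A : Matrix (Fin 2) (Fin 2) ℂ) : ℝ :=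
  ‖LinearMap.toContinuousLinearMap (Matrix.toEuclideanLin A)‖

/-- The domain 𝔽 = {(a₁₁, a₂₂, det A, a₁₂ + a₂₁) : A ∈ M₂(ℂ), ‖A‖ < 1}. -/
noncomputable def domF : Set (ℂ × ℂ × ℂ × ℂ) :=
  {w | ∃ A : Matrix (Fin 2) (Fin 2) ℂ, opNorm A < 1 ∧
    w = (A 0 0, A 1 1, A.det, A 0 1 + A 1 0)}

/-- The closed symmetrized bidisc Γ. -/
def GammaSet : Set (ℂ × ℂ) :=
  {w | ∃ z1 z2 : ℂ, ‖z1‖ ≤ 1 ∧ ‖z2‖ ≤ 1 ∧ w = (z1 + z2, z1 * z2)}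

open scoped Matrix.Norms.L2Operator
open Matrix

section Aux

lemma opNorm_eq_norm (A : Matrix (Fin 2) (Fin 2) ℂ) : opNorm A = ‖A‖ := rfl

lemma euc_norm_sq (v : EuclideanSpace ℂ (Fin 2)) :
    ‖v‖ ^ 2 = ‖v 0‖ ^ 2 + ‖v 1‖ ^ 2 := by
  rw [EuclideanSpace.norm_eq, Real.sq_sqrt (by positivity)]
  simp [Fin.sum_univ_two]

lemma apply_zero (A : Matrix (Fin 2) (Fin 2) ℂ) (v : EuclideanSpace ℂ (Fin 2)) :
    (LinearMap.toContinuousLinearMap (Matrix.toEuclideanLin A) v : EuclideanSpace ℂ (Fin 2)) 0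
      = A 0 0 * v 0 + A 0 1 * v 1 := by
  show (A *ᵥ (WithLp.equiv 2 (Fin 2 → ℂ)) v) 0 = _
  simp [Matrix.mulVec, dotProduct, Fin.sum_univ_two]

lemma apply_one (A : Matrix (Fin 2) (Fin 2) ℂ) (v : EuclideanSpace ℂ (Fin 2)) :
    (LinearMap.toContinuousLinearMap (Matrix.toEuclideanLin A) v : EuclideanSpace ℂ (Fin 2)) 1
      = A 1 0 * v 0 + A 1 1 * v 1 := by
  show (A *ᵥ (WithLp.equiv 2 (Fin 2 → ℂ)) v) 1 = _
  simp [Matrix.mulVec, dotProduct, Fin.sum_univ_two]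

/-- `opNorm A ≤ 1` iff the associated quadratic form inequality holds for all vectors. -/
lemma opNorm_le_one_iff (A : Matrix (Fin 2) (Fin 2) ℂ) :
    opNorm A ≤ 1 ↔ ∀ v0 v1 : ℂ,
      ‖A 0 0 * v0 + A 0 1 * v1‖ ^ 2
        + ‖A 1 0 * v0 + A 1 1 * v1‖ ^ 2
      ≤ ‖v0‖ ^ 2 + ‖v1‖ ^ 2 := by
  have key : ∀ v : EuclideanSpace ℂ (Fin 2),
      ‖LinearMap.toContinuousLinearMap (Matrix.toEuclideanLin A) v‖ ^ 2
        = ‖A 0 0 * v 0 + A 0 1 * v 1‖ ^ 2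
          + ‖A 1 0 * v 0 + A 1 1 * v 1‖ ^ 2 := by
    intro v
    rw [euc_norm_sq, apply_zero, apply_one]
  constructor
  · intro h v0 v1
    set v : EuclideanSpace ℂ (Fin 2) := (WithLp.equiv 2 (Fin 2 → ℂ)).symm ![v0, v1] with hv
    have h0 : v 0 = v0 := rfl
    have h1 : v 1 = v1 := rfl
    have hle : ‖LinearMap.toContinuousLinearMap (Matrix.toEuclideanLin A) v‖ ≤ ‖v‖ := by
      calc ‖_‖ ≤ opNorm A * ‖v‖ := ContinuousLinearMap.le_opNorm _ v
      _ ≤ 1 * ‖v‖ := mul_le_mul_of_nonneg_right h (norm_nonneg v)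
      _ = ‖v‖ := one_mul _
    have := key v
    rw [h0, h1] at this
    rw [← this]
    have hv2 : ‖v‖ ^ 2 = ‖v0‖ ^ 2 + ‖v1‖ ^ 2 := by
      rw [euc_norm_sq, h0, h1]
    rw [← hv2]
    nlinarith [norm_nonneg (LinearMap.toContinuousLinearMap (Matrix.toEuclideanLin A) v),
      norm_nonneg v]
  · intro h
    apply ContinuousLinearMap.opNorm_le_bound _ zero_le_one
    intro v
    rw [one_mul]
    have h2 := h (v 0) (v 1)
    rw [← key v, ← euc_norm_sq] at h2
    nlinarith [norm_nonneg (LinearMap.toContinuousLinearMap (Matrix.toEuclideanLin A) v),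
      norm_nonneg v]

lemma amgm (m0 m1 k t0 t1 : ℝ) (hm0 : 0 ≤ m0) (hm1 : 0 ≤ m1) (hk : 0 ≤ k)
    (ht0 : 0 ≤ t0) (ht1 : 0 ≤ t1) (h : k^2 ≤ m0*m1) :
    2*(k*(t0*t1)) ≤ m0*t0^2 + m1*t1^2 := by
  have hs : k ≤ Real.sqrt m0 * Real.sqrt m1 := by
    have : k = Real.sqrt (k^2) := (Real.sqrt_sq hk).symm
    rw [this, ← Real.sqrt_mul hm0]
    exact Real.sqrt_le_sqrt h
  have h1 : k*(t0*t1) ≤ (Real.sqrt m0*t0)*(Real.sqrt m1*t1) := by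
    calc k*(t0*t1) ≤ (Real.sqrt m0 * Real.sqrt m1)*(t0*t1) :=
      mul_le_mul_of_nonneg_right hs (mul_nonneg ht0 ht1)
    _ = _ := by ring
  nlinarith [sq_nonneg (Real.sqrt m0*t0 - Real.sqrt m1*t1), Real.sq_sqrt hm0, Real.sq_sqrt hm1,
    sq_nonneg t0, sq_nonneg t1]

lemma expandQ (x a z1 z2 v0 v1 : ℂ) :
    ‖x*v0+z1*v1‖^2 + ‖z2*v0+a*v1‖^2
      = (‖x‖^2 + ‖z2‖^2) * ‖v0‖^2
        + (‖z1‖^2 + ‖a‖^2) * ‖v1‖^2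
        + 2 * (((starRingEnd ℂ x * z1 + starRingEnd ℂ z2 * a) * starRingEnd ℂ v0) * v1).re := by
  simp only [Complex.sq_norm, Complex.normSq_apply, Complex.mul_re, Complex.mul_im,
    Complex.add_re, Complex.add_im, Complex.conj_re, Complex.conj_im]
  ring

lemma detIdentity (x a z1 z2 : ℂ) :
    (1 - ‖x‖^2 - ‖z2‖^2) * (1 - ‖z1‖^2 - ‖a‖^2)
      - ‖starRingEnd ℂ x * z1 + starRingEnd ℂ z2 * a‖^2
    = 1 - ‖x‖^2 - ‖a‖^2 - ‖z1‖^2 - ‖z2‖^2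
        + ‖x*a - z1*z2‖^2 := by
  simp only [Complex.sq_norm, Complex.normSq_apply, Complex.mul_re, Complex.mul_im,
    Complex.add_re, Complex.add_im, Complex.sub_re, Complex.sub_im,
    Complex.conj_re, Complex.conj_im]
  ring

lemma sumSq (z1 z2 s q : ℂ) (hs : z1 + z2 = s) (hq : z1 * z2 = q) :
    ‖z1‖^2 + ‖z2‖^2
      = (‖s‖^2 + ‖s^2 - 4*q‖) / 2 := by
  have h : s^2 - 4*q = (z1 - z2)^2 := by rw [← hs, ← hq]; ring
  rw [h, ← hs, norm_pow]
  simp only [Complex.sq_norm, Complex.normSq_apply, Complex.add_re, Complex.add_im,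
    Complex.sub_re, Complex.sub_im]
  ring

/-- The key characterization of contractivity for a 2×2 matrix. -/
lemma contraction_iff (x a z1 z2 : ℂ) :
    opNorm !![x, z1; z2, a] ≤ 1 ↔
      (‖x‖^2 + ‖z2‖^2 ≤ 1 ∧
       ‖z1‖^2 + ‖a‖^2 ≤ 1 ∧
       ‖starRingEnd ℂ x * z1 + starRingEnd ℂ z2 * a‖^2
         ≤ (1 - ‖x‖^2 - ‖z2‖^2) * (1 - ‖z1‖^2 - ‖a‖^2)) := by
  rw [opNorm_le_one_iff]
  have e00 : !![x, z1; z2, a] 0 0 = x := rfl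
  have e01 : !![x, z1; z2, a] 0 1 = z1 := rfl
  have e10 : !![x, z1; z2, a] 1 0 = z2 := rfl
  have e11 : !![x, z1; z2, a] 1 1 = a := rfl
  rw [e00, e01, e10, e11]
  constructor
  · intro h
    set K := starRingEnd ℂ x * z1 + starRingEnd ℂ z2 * a with hK
    have h0 : ‖x‖^2 + ‖z2‖^2 ≤ 1 := by
      have := h 1 0
      simpa using this
    have h1 : ‖z1‖^2 + ‖a‖^2 ≤ 1 := by
      have := h 0 1
      simpa using this
    refine ⟨h0, h1, ?_⟩
    set m0 := 1 - ‖x‖^2 - ‖z2‖^2 with hm0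
    set m1 := 1 - ‖z1‖^2 - ‖a‖^2 with hm1
    set k2 := ‖K‖ ^ 2 with hk2
    -- for all real t : 0 ≤ m1 * t^2 - 2*k2*t + m0*k2, by plugging v0 = K, v1 = t
    have hq : ∀ t : ℝ, 0 ≤ m1 * (t*t) + (-(2*k2)) * t + m0*k2 := by
      intro t
      have := h K (t : ℂ)
      rw [expandQ x a z1 z2 K (t:ℂ)] at this
      have hcross : ((K * starRingEnd ℂ K) * (t:ℂ)).re = k2 * t := by
        rw [Complex.mul_conj]
        simp [hk2, Complex.sq_norm]
      rw [hcross] at this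
      have habsK : ‖K‖ ^ 2 = k2 := rfl
      have habst : ‖(t:ℂ)‖ ^ 2 = t^2 := by
        rw [Complex.norm_real, Real.norm_eq_abs]; exact sq_abs t
      rw [habst] at this
      nlinarith [this]
    have hd := discrim_le_zero hq
    rw [discrim] at hd
    -- (2k2)^2 - 4 m1 (m0 k2) ≤ 0
    have hm0' : 0 ≤ m0 := by rw [hm0]; linarith
    have hm1' : 0 ≤ m1 := by rw [hm1]; linarith
    rcases eq_or_lt_of_le (sq_nonneg (‖K‖)) with he | hlt
    · have hz : k2 = 0 := by rw [hk2]; exact he.symm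
      rw [hz]
      exact mul_nonneg hm0' hm1'
    · rw [← hk2] at hlt
      nlinarith [hd, hlt]
  · rintro ⟨h0, h1, h2⟩ v0 v1
    rw [expandQ]
    set K := starRingEnd ℂ x * z1 + starRingEnd ℂ z2 * a with hK
    have hre : ((K * starRingEnd ℂ v0) * v1).re
        ≤ ‖K‖ * (‖v0‖ * ‖v1‖) := by
      calc ((K * starRingEnd ℂ v0) * v1).re ≤ ‖(K * starRingEnd ℂ v0) * v1‖ :=
        Complex.re_le_norm _
      _ = ‖K‖ * (‖v0‖ * ‖v1‖) := by
        rw [norm_mul, norm_mul, Complex.norm_conj]; ring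
    have key := amgm (1 - ‖x‖^2 - ‖z2‖^2)
      (1 - ‖z1‖^2 - ‖a‖^2) (‖K‖)
      (‖v0‖) (‖v1‖) (by linarith) (by linarith)
      (norm_nonneg _) (norm_nonneg _) (norm_nonneg _) h2
    nlinarith [key, hre]

end Aux

/-- The boundary map. -/
noncomputable def phiMap (A : Matrix (Fin 2) (Fin 2) ℂ) : ℂ × ℂ × ℂ × ℂ :=
  (A 0 0, A 1 1, A.det, A 0 1 + A 1 0)

lemma phiMap_cont : Continuous phiMap := by
  have hdet : phiMap = fun A : Matrix (Fin 2) (Fin 2) ℂ =>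
      (A 0 0, A 1 1, A 0 0 * A 1 1 - A 0 1 * A 1 0, A 0 1 + A 1 0) := by
    funext A
    rw [phiMap, Matrix.det_fin_two]
  rw [hdet]
  have he : ∀ i j : Fin 2, Continuous (fun A : Matrix (Fin 2) (Fin 2) ℂ => A i j) :=
    fun i j => (continuous_apply j).comp (continuous_apply i)
  exact ((he 0 0).prodMk (((he 1 1)).prodMk
    ((((he 0 0).mul (he 1 1)).sub ((he 0 1).mul (he 1 0))).prodMk ((he 0 1).add (he 1 0)))))

lemma domF_eq : domF = phiMap '' Metric.ball 0 1 := by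
  ext w
  constructor
  · rintro ⟨A, hA, hw⟩
    exact ⟨A, by simpa [Metric.mem_ball, dist_zero_right] using (opNorm_eq_norm A ▸ hA), hw.symm⟩
  · rintro ⟨A, hA, hw⟩
    exact ⟨A, by rw [opNorm_eq_norm]; simpa [Metric.mem_ball, dist_zero_right] using hA, hw.symm⟩

lemma closure_domF : closure domF = phiMap '' Metric.closedBall 0 1 := by
  apply Set.Subset.antisymm
  · apply closure_minimal
    · rw [domF_eq]
      exact Set.image_mono Metric.ball_subset_closedBall
    · exact ((isCompact_closedBall (0 : Matrix (Fin 2) (Fin 2) ℂ) 1).image phiMap_cont).isClosed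
  · rw [← closure_ball (0 : Matrix (Fin 2) (Fin 2) ℂ) one_ne_zero, domF_eq]
    exact image_closure_subset_closure_image phiMap_cont

lemma iff12 (x a p s : ℂ) :
    (x, a, p, s) ∈ closure domF ↔
      ∃ A : Matrix (Fin 2) (Fin 2) ℂ, opNorm A ≤ 1 ∧
        (A 0 0, A 1 1, A.det, A 0 1 + A 1 0) = (x, a, p, s) := by
  rw [closure_domF]
  constructor
  · rintro ⟨A, hA, hw⟩
    exact ⟨A, by rw [opNorm_eq_norm]; simpa [Metric.mem_closedBall, dist_zero_right] using hA, hw⟩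
  · rintro ⟨A, hA, hw⟩
    exact ⟨A, by simpa [Metric.mem_closedBall, dist_zero_right] using (opNorm_eq_norm A ▸ hA), hw⟩

lemma iff23 (x a p s : ℂ) :
    (∃ A : Matrix (Fin 2) (Fin 2) ℂ, opNorm A ≤ 1 ∧
        (A 0 0, A 1 1, A.det, A 0 1 + A 1 0) = (x, a, p, s)) ↔
      ((s, a * x - p) ∈ GammaSet ∧ ‖p‖ ≤ 1 ∧
      0 ≤ 1 - ‖a‖ ^ 2 - ‖x‖ ^ 2 + ‖p‖ ^ 2
          - ‖s‖ ^ 2 / 2 - ‖s ^ 2 - 4 * (a * x - p)‖ / 2) := by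
  constructor
  · rintro ⟨A, hA, heq⟩
    simp only [Prod.mk.injEq] at heq
    obtain ⟨hx, ha, hp, hs⟩ := heq
    set z1 := A 0 1 with hz1def
    set z2 := A 1 0 with hz2def
    have hmat : !![x, z1; z2, a] = A := by
      rw [← hx, ← ha]
      exact (Matrix.eta_fin_two A).symm
    rw [← hmat] at hA
    obtain ⟨h0, h1, h2⟩ := (contraction_iff x a z1 z2).mp hA
    have hq : z1 * z2 = a * x - p := by
      rw [← hp, Matrix.det_fin_two A, hx, ha, ← hz1def, ← hz2def]; ring
    have hxa : x * a - z1 * z2 = p := by rw [hq]; ring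
    have hD := detIdentity x a z1 z2
    rw [hxa] at hD
    have hsum := sumSq z1 z2 s (a * x - p) hs hq
    refine ⟨⟨z1, z2, ?_, ?_, ?_⟩, ?_, ?_⟩
    · nlinarith [norm_nonneg z1, sq_nonneg (‖a‖)]
    · nlinarith [norm_nonneg z2, sq_nonneg (‖x‖)]
    · rw [Prod.mk.injEq]
      exact ⟨hs.symm, hq.symm⟩
    · -- |p| ≤ 1
      have hple : ‖p‖ ≤ ‖x‖ * ‖a‖
          + ‖z1‖ * ‖z2‖ := by
        rw [← hxa]
        calc ‖x * a - z1 * z2‖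
            ≤ ‖x * a‖ + ‖z1 * z2‖ := by
              simpa [sub_eq_add_neg] using norm_add_le (x * a) (-(z1 * z2))
        _ = _ := by rw [norm_mul, norm_mul]
      have c1 : (0:ℝ) ≤ 1 - (‖x‖ ^ 2 + ‖z2‖ ^ 2) := by linarith
      have c2 : (0:ℝ) ≤ 1 - (‖z1‖ ^ 2 + ‖a‖ ^ 2) := by linarith
      nlinarith [sq_nonneg (‖x‖ * ‖z1‖ - ‖a‖ * ‖z2‖),
        mul_nonneg c1 c2,
        mul_nonneg (norm_nonneg x) (norm_nonneg a),
        mul_nonneg (norm_nonneg z1) (norm_nonneg z2)]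
    · linarith [h2, hD, hsum]
  · rintro ⟨⟨z1, z2, hz1, hz2, hg⟩, hp, hineq⟩
    rw [Prod.mk.injEq] at hg
    obtain ⟨hgs, hgq⟩ := hg
    have hs : z1 + z2 = s := hgs.symm
    have hq : z1 * z2 = a * x - p := hgq.symm
    have hxa : x * a - z1 * z2 = p := by rw [hq]; ring
    have hD := detIdentity x a z1 z2
    rw [hxa] at hD
    have hsum := sumSq z1 z2 s (a * x - p) hs hq
    have h2 : ‖starRingEnd ℂ x * z1 + starRingEnd ℂ z2 * a‖ ^ 2
        ≤ (1 - ‖x‖ ^ 2 - ‖z2‖ ^ 2)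
          * (1 - ‖z1‖ ^ 2 - ‖a‖ ^ 2) := by linarith
    have hsumnn : (0:ℝ) ≤ (1 - ‖x‖ ^ 2 - ‖z2‖ ^ 2)
        + (1 - ‖z1‖ ^ 2 - ‖a‖ ^ 2) := by
      nlinarith [norm_nonneg p, sq_nonneg (‖starRingEnd ℂ x * z1 + starRingEnd ℂ z2 * a‖)]
    have h0 : ‖x‖ ^ 2 + ‖z2‖ ^ 2 ≤ 1 := by
      nlinarith [h2, sq_nonneg (‖starRingEnd ℂ x * z1 + starRingEnd ℂ z2 * a‖)]
    have h1 : ‖z1‖ ^ 2 + ‖a‖ ^ 2 ≤ 1 := by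
      nlinarith [h2, sq_nonneg (‖starRingEnd ℂ x * z1 + starRingEnd ℂ z2 * a‖)]
    refine ⟨!![x, z1; z2, a], (contraction_iff x a z1 z2).mpr ⟨h0, h1, h2⟩, ?_⟩
    have e00 : !![x, z1; z2, a] 0 0 = x := rfl
    have e01 : !![x, z1; z2, a] 0 1 = z1 := rfl
    have e10 : !![x, z1; z2, a] 1 0 = z2 := rfl
    have e11 : !![x, z1; z2, a] 1 1 = a := rfl
    rw [Matrix.det_fin_two, e00, e01, e10, e11, Prod.mk.injEq]
    exact ⟨rfl, by rw [Prod.mk.injEq]; exact ⟨rfl, by rw [Prod.mk.injEq]; exact ⟨hxa, hs⟩⟩⟩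

/-- Proposition 2.4: (x, a, p, s) ∈ closure 𝔽 iff it equals (a₁₁, a₂₂, det A, a₁₂+a₂₁) for some
A with ‖A‖ ≤ 1, iff (s, ax−p) ∈ Γ, |p| ≤ 1 and
1 − |a|² − |x|² + |p|² − |s|²/2 − |s² − 4(ax−p)|/2 ≥ 0. -/
theorem stmt3 (x a p s : ℂ) :
    ((x, a, p, s) ∈ closure domF ↔
      ∃ A : Matrix (Fin 2) (Fin 2) ℂ, opNorm A ≤ 1 ∧
        (A 0 0, A 1 1, A.det, A 0 1 + A 1 0) = (x, a, p, s)) ∧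
    ((x, a, p, s) ∈ closure domF ↔
      (s, a * x - p) ∈ GammaSet ∧ ‖p‖ ≤ 1 ∧
      0 ≤ 1 - ‖a‖ ^ 2 - ‖x‖ ^ 2 + ‖p‖ ^ 2
          - ‖s‖ ^ 2 / 2 - ‖s ^ 2 - 4 * (a * x - p)‖ / 2) :=
  ⟨iff12 x a p s, (iff12 x a p s).trans (iff23 x a p s)⟩
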